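/- Let T = (T_n) be i.i.d. random variables with P(T_n = 1) = p and P(T_n = 2) = 1 − p, p ∈ (0,1), and let X = O_T be the directed random sequence. Then for all n ≥ 2, P(X_n = 1) = p(1 − p^{n−2} + p^{n−1}). -/

import Mathlib

def dirStep (X : List ℕ) (k t : ℕ) : List ℕ :=
  let X' := X ++ [t]
  X' ++ List.replicate (X'.getD k 1 - 1) t

/-- The word directed by the finite directing word `T`: at step `i` (0-indexed),
append `t_i` followed by `X[i] - 1` further copies of `t_i`. -/
def dirWord (T : List ℕ) : List ℕ :=
  (T.foldl (fun p t => (dirStep p.1 p.2 t, p.2 + 1)) (([] : List ℕ), 0)).1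

/-- The `n`-th letter (1-indexed) of the infinite sequence directed by `T`
(whose meaningful indices are `1, 2, …`). -/
def dirSeq (T : ℕ → ℕ) (n : ℕ) : ℕ :=
  (dirWord (List.ofFn fun i : Fin n => T (i + 1))).getD (n - 1) 0

section Aux

lemma foldl_counter (l : List ℕ) (X : List ℕ) (k : ℕ) :
    (l.foldl (fun p t => (dirStep p.1 p.2 t, p.2 + 1)) (X, k)).2 = k + l.length := by
  induction l generalizing X k with
  | nil => simp
  | cons a l ih => simp [List.foldl_cons, ih]; omega

lemma dirWord_snoc (w : List ℕ) (t : ℕ) :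
    dirWord (w ++ [t]) = dirStep (dirWord w) w.length t := by
  unfold dirWord
  rw [List.foldl_append]
  have : (w.foldl (fun p t => (dirStep p.1 p.2 t, p.2 + 1)) (([] : List ℕ), 0))
      = (dirWord w, w.length) := by
    have h2 := foldl_counter w [] 0
    exact Prod.ext rfl (by simpa using h2)
  rw [this]
  rfl

lemma dirWord_nil : dirWord [] = [] := rfl

lemma length_dirWord_ge (w : List ℕ) : w.length ≤ (dirWord w).length := by
  induction w using List.reverseRecOn with
  | nil => simp [dirWord_nil]
  | append_singleton w t ih =>
      rw [dirWord_snoc]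
      unfold dirStep
      simp only [List.length_append, List.length_replicate, List.length_cons]
      simp
      omega

lemma mem_dirWord (w : List ℕ) (x : ℕ) (hx : x ∈ dirWord w) : x ∈ w := by
  induction w using List.reverseRecOn with
  | nil => simp [dirWord_nil] at hx
  | append_singleton w t ih =>
      rw [dirWord_snoc] at hx
      unfold dirStep at hx
      simp only [List.mem_append, List.mem_replicate, List.mem_singleton] at hx
      rcases hx with (h | h) | h
      · exact List.mem_append_left _ (ih h)
      · simp [h]
      · simp [h.2]

/-- The snoc formula: the appended block. -/
lemma dirWord_snoc_eq (w : List ℕ) (t : ℕ)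
    (H : ∀ x ∈ w, x = 1 ∨ x = 2) (ht : t = 1 ∨ t = 2) :
    dirWord (w ++ [t]) = dirWord w ++ List.replicate ((dirWord w).getD w.length t) t := by
  rw [dirWord_snoc]
  show (dirWord w ++ [t]) ++ List.replicate ((dirWord w ++ [t]).getD w.length 1 - 1) t = _
  have hk : w.length ≤ (dirWord w).length := length_dirWord_ge w
  rcases lt_or_eq_of_le hk with h | h
  · have e1 : (dirWord w ++ [t]).getD w.length 1 = (dirWord w).getD w.length t := by
      rw [List.getD_append _ _ _ _ h, List.getD_eq_getElem _ _ h, List.getD_eq_getElem _ _ h]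
    have hmem : (dirWord w).getD w.length t = 1 ∨ (dirWord w).getD w.length t = 2 := by
      rw [List.getD_eq_getElem _ _ h]
      exact H _ (mem_dirWord w _ (List.getElem_mem h))
    rw [e1]
    rcases hmem with h2 | h2 <;> rw [h2] <;> simp [List.replicate_succ]
  · have e1 : (dirWord w ++ [t]).getD w.length 1 = t := by
      rw [List.getD_append_right _ _ _ _ h.ge, h]
      simp
    have e2 : (dirWord w).getD w.length t = t := List.getD_eq_default _ _ h.ge
    rw [e1, e2]
    rcases ht with h2 | h2 <;> rw [h2] <;> simp [List.replicate_succ]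

lemma length_dirWord_snoc (w : List ℕ) (t : ℕ)
    (H : ∀ x ∈ w, x = 1 ∨ x = 2) (ht : t = 1 ∨ t = 2) :
    (dirWord (w ++ [t])).length = (dirWord w).length + (dirWord w).getD w.length t := by
  rw [dirWord_snoc_eq w t H ht]; simp

lemma dirWord_prefix_snoc (w : List ℕ) (t : ℕ) : dirWord w <+: dirWord (w ++ [t]) := by
  rw [dirWord_snoc]
  exact ⟨[t] ++ List.replicate (((dirWord w ++ [t]).getD w.length 1) - 1) t,
    by simp [dirStep]⟩

lemma dirWord_prefix (w u : List ℕ) : dirWord w <+: dirWord (w ++ u) := by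
  induction u using List.reverseRecOn with
  | nil => simp
  | append_singleton u t ih =>
      refine ih.trans ?_
      rw [← List.append_assoc]
      exact dirWord_prefix_snoc _ t

lemma dirWord_replicate_one (m : ℕ) : dirWord (List.replicate m 1) = List.replicate m 1 := by
  induction m with
  | zero => simp [dirWord_nil]
  | succ m ih =>
      have : List.replicate (m+1) (1:ℕ) = List.replicate m 1 ++ [1] := by
        simp [List.replicate_succ']
      rw [this, dirWord_snoc_eq _ _ (by simp +contextual) (Or.inl rfl), ih,
        List.length_replicate]
      have h2 : (List.replicate m (1:ℕ)).getD m 1 = 1 :=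
        List.getD_eq_default _ _ (by simp)
      rw [h2]
      simp [List.replicate_succ']

lemma all_ones_of_len_le (w : List ℕ) (H : ∀ x ∈ w, x = 1 ∨ x = 2)
    (h : (dirWord w).length ≤ w.length) : w = List.replicate w.length 1 := by
  induction w using List.reverseRecOn with
  | nil => simp
  | append_singleton w t ih =>
      have Hw : ∀ x ∈ w, x = 1 ∨ x = 2 := fun x hx => H x (List.mem_append_left _ hx)
      have ht : t = 1 ∨ t = 2 := H t (by simp)
      rw [length_dirWord_snoc w t Hw ht] at h
      simp only [List.length_append, List.length_singleton] at h
      have hge := length_dirWord_ge w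
      -- from h : len + c ≤ w.length + 1, with len ≥ w.length
      have hlen : (dirWord w).length = w.length := by
        have hc : 1 ≤ (dirWord w).getD w.length t := by
          rcases Nat.lt_or_ge w.length (dirWord w).length with hh | hh
          · rw [List.getD_eq_getElem _ _ hh]
            rcases Hw _ (mem_dirWord w _ (List.getElem_mem hh)) with h2 | h2 <;> omega
          · rw [List.getD_eq_default _ _ hh]; rcases ht with h2 | h2 <;> omega
        omega
      have hw := ih Hw hlen.le
      have hc : (dirWord w).getD w.length t = t := by
        rw [List.getD_eq_default _ _ hlen.le]
      rw [hc] at h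
      have ht1 : t = 1 := by rcases ht with h2 | h2 <;> omega
      rw [ht1, hw]
      simp [List.replicate_succ']

lemma len_lt_of_not_ones (w : List ℕ) (H : ∀ x ∈ w, x = 1 ∨ x = 2)
    (h : w ≠ List.replicate w.length 1) : w.length < (dirWord w).length := by
  rcases Nat.lt_or_ge w.length (dirWord w).length with hh | hh
  · exact hh
  · exact absurd (all_ones_of_len_le w H hh) h

lemma getD_of_prefix (l l' : List ℕ) (h : l <+: l') (m : ℕ) (hm : m < l.length) (d : ℕ) :
    l'.getD m d = l.getD m d := by
  rw [List.getD_eq_getElem _ _ hm, List.getD_eq_getElem _ _ (hm.trans_le h.length_le)]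
  exact (h.getElem hm).symm

lemma dirWord_mono_prefix (l l' : List ℕ) (h : l <+: l') : dirWord l <+: dirWord l' := by
  obtain ⟨u, rfl⟩ := h
  exact dirWord_prefix l u

/-- The block-letter lemma. -/
lemma letter_eq (w : List ℕ) (H : ∀ x ∈ w, x = 1 ∨ x = 2) (k m : ℕ) (hk : k < w.length)
    (h1 : (dirWord (w.take k)).length ≤ m) (h2 : m < (dirWord (w.take (k+1))).length) :
    (dirWord w).getD m 0 = w.getD k 0 := by
  have htk : w.take (k+1) = w.take k ++ [w[k]] := by
    rw [List.take_succ]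
    simp [List.getElem?_eq_getElem hk]
  have Hu : ∀ x ∈ w.take k, x = 1 ∨ x = 2 := fun x hx => H x (List.mem_of_mem_take hx)
  have ha : w[k] = 1 ∨ w[k] = 2 := H _ (List.getElem_mem hk)
  have hW : dirWord (w.take (k+1)) =
      dirWord (w.take k) ++ List.replicate ((dirWord (w.take k)).getD (w.take k).length w[k]) w[k] := by
    rw [htk, dirWord_snoc_eq _ _ Hu ha]
  have hlen2 := h2
  rw [hW] at hlen2
  simp only [List.length_append, List.length_replicate] at hlen2
  have e1 : (dirWord (w.take (k+1))).getD m 0 = w[k] := by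
    rw [hW, List.getD_append_right _ _ _ _ h1]
    have hb : m - (dirWord (w.take k)).length
        < ((dirWord (w.take k)).getD (w.take k).length w[k]) := by omega
    rw [List.getD_eq_getElem _ _ (by simpa using hb), List.getElem_replicate]
  have hpre : dirWord (w.take (k+1)) <+: dirWord w :=
    dirWord_mono_prefix (w.take (k+1)) w (List.take_prefix _ _)
  rw [getD_of_prefix _ _ hpre m h2 0, e1, List.getD_eq_getElem _ _ hk]

namespace Stmt8
variable {n : ℕ}

def lw (v : Fin n → Bool) : List ℕ := List.ofFn fun i => cond (v i) 1 2

lemma length_lw (v : Fin n → Bool) : (lw v).length = n := by simp [lw]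

lemma getElem_lw (v : Fin n → Bool) (m : ℕ) (hm : m < (lw v).length) :
    (lw v)[m] = cond (v ⟨m, by simpa [length_lw] using hm⟩) 1 2 := by
  simp [lw]

lemma mem_lw (v : Fin n → Bool) : ∀ x ∈ lw v, x = 1 ∨ x = 2 := by
  intro x hx
  simp only [lw, List.mem_ofFn] at hx
  obtain ⟨i, rfl⟩ := hx
  cases hvi : v i <;> simp [hvi]

lemma mem_take_lw (v : Fin n → Bool) (m : ℕ) : ∀ x ∈ (lw v).take m, x = 1 ∨ x = 2 :=
  fun x hx => mem_lw v x (List.mem_of_mem_take hx)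

def Pv (v : Fin n → Bool) (m : ℕ) : Prop := n ≤ (dirWord ((lw v).take m)).length

instance (v : Fin n → Bool) : DecidablePred (Pv v) := fun _ => Nat.decLe _ _

lemma Pv_top (v : Fin n → Bool) : Pv v n := by
  unfold Pv
  rw [List.take_of_length_le (by rw [length_lw])]
  simpa [length_lw] using length_dirWord_ge (lw v)

lemma Pv_exists (v : Fin n → Bool) : ∃ m, Pv v m := ⟨n, Pv_top v⟩

def K (v : Fin n → Bool) : ℕ := Nat.find (Pv_exists v)

lemma Pv_K (v : Fin n → Bool) : Pv v (K v) := Nat.find_spec (Pv_exists v)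

lemma not_Pv_lt (v : Fin n → Bool) (m : ℕ) (hm : m < K v) : ¬ Pv v m :=
  Nat.find_min (Pv_exists v) hm

lemma K_le (v : Fin n → Bool) : K v ≤ n := Nat.find_le (Pv_top v)

lemma K_pos (v : Fin n → Bool) (hn : 0 < n) : 0 < K v := by
  rcases Nat.eq_zero_or_pos (K v) with h0 | h
  · exfalso
    have hp := Pv_K v
    rw [h0] at hp
    unfold Pv at hp
    simp only [List.take_zero, dirWord_nil, List.length_nil] at hp
    omega
  · exact h

lemma take_lw_eq (v u : Fin n → Bool) (m : ℕ)
    (h : ∀ i : Fin n, (i : ℕ) < m → v i = u i) :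
    (lw v).take m = (lw u).take m := by
  apply List.ext_getElem
  · simp [length_lw]
  · intro i h1 h2
    rw [List.getElem_take, List.getElem_take, getElem_lw, getElem_lw]
    have hi : i < m := by simp [length_lw] at h1; omega
    rw [h _ hi]

lemma take_lw_ones_iff (v : Fin n → Bool) (m : ℕ) (hm : m ≤ n) :
    (lw v).take m = List.replicate m 1 ↔ ∀ i : Fin n, (i : ℕ) < m → v i = true := by
  constructor
  · intro h i hi
    have h2 : (i : ℕ) < ((lw v).take m).length := by simp [length_lw]; omega
    have h3 := List.getElem_of_eq h h2
    rw [List.getElem_take, getElem_lw, List.getElem_replicate, Fin.eta] at h3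
    cases hvi : v i
    · rw [hvi] at h3; simp at h3
    · rfl
  · intro h
    apply List.ext_getElem
    · simp [length_lw]; omega
    · intro i h1 h2
      rw [List.getElem_take, getElem_lw, List.getElem_replicate]
      have hi : i < m := by simpa using h2
      rw [h _ hi]
      simp

lemma Pv_mono (v : Fin n → Bool) (m m' : ℕ) (h : m ≤ m') (hp : Pv v m) : Pv v m' := by
  unfold Pv at *
  have e : ((lw v).take m').take m = (lw v).take m := by
    rw [List.take_take, min_eq_left h]
  have hpre : (lw v).take m <+: (lw v).take m' := by
    rw [← e]; exact List.take_prefix _ _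
  exact hp.trans (dirWord_mono_prefix _ _ hpre).length_le

def acc (v : Fin n → Bool) : Prop := (dirWord (lw v)).getD (n-1) 0 = 1

instance : DecidablePred (acc (n := n)) := fun _ => Nat.decEq _ _

def idx (v : Fin n → Bool) (hn : 2 ≤ n) : Fin n :=
  ⟨K v - 1, by have h1 := K_le v; have h2 := K_pos v (by omega); omega⟩

lemma take_succ_lw (v : Fin n → Bool) (m : ℕ) (hm : m < n) :
    (lw v).take (m+1) = (lw v).take m ++ [(lw v)[m]'(by rw [length_lw]; omega)] := by
  rw [List.take_succ, List.getElem?_eq_getElem (by rw [length_lw]; omega)]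
  simp

lemma acc_iff (hn : 2 ≤ n) (v : Fin n → Bool) : acc v ↔ v (idx v hn) = true := by
  have hKpos := K_pos v (by omega)
  have hKle := K_le v
  have hk : K v - 1 < (lw v).length := by rw [length_lw]; omega
  have h1 : (dirWord ((lw v).take (K v - 1))).length ≤ n - 1 := by
    have := not_Pv_lt v (K v - 1) (by omega)
    unfold Pv at this
    omega
  have h2 : n - 1 < (dirWord ((lw v).take ((K v - 1) + 1))).length := by
    have hp := Pv_K v
    unfold Pv at hp
    have e : (lw v).take (K v - 1 + 1) = (lw v).take (K v) := by
      congr 1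
      omega
    rw [e]
    omega
  have hl := letter_eq (lw v) (mem_lw v) (K v - 1) (n-1) hk h1 h2
  unfold acc
  rw [hl, List.getD_eq_getElem _ _ hk, getElem_lw]
  cases hvi : v (idx v hn)
  · unfold idx at hvi; rw [hvi]; simp
  · unfold idx at hvi; rw [hvi]; simp

lemma K_eq_n_iff (hn : 2 ≤ n) (v : Fin n → Bool) :
    K v = n ↔ ∀ i : Fin n, (i : ℕ) < n - 1 → v i = true := by
  have hlen : ((lw v).take (n-1)).length = n - 1 := by
    rw [List.length_take, length_lw]; omega
  constructor
  · intro hK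
    have hnp := not_Pv_lt v (n-1) (by omega)
    unfold Pv at hnp
    have hones := all_ones_of_len_le _ (mem_take_lw v (n-1)) ?_
    · rw [hlen] at hones
      exact (take_lw_ones_iff v (n-1) (by omega)).1 hones
    · rw [hlen]; omega
  · intro h
    have hones : (lw v).take (n-1) = List.replicate (n-1) 1 :=
      (take_lw_ones_iff v (n-1) (by omega)).2 h
    have hnp : ¬ Pv v (n-1) := by
      unfold Pv
      rw [hones, dirWord_replicate_one, List.length_replicate]
      omega
    have h1 : n - 1 < K v := by
      by_contra hc
      exact hnp (Pv_mono v (K v) (n-1) (by omega) (Pv_K v))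
    have := K_le v
    omega

/-- the anomalous words: all ones up to `n-2`, then a two. -/
def Bad (v : Fin n → Bool) : Prop :=
  (∀ i : Fin n, (i : ℕ) < n - 2 → v i = true) ∧ (∀ i : Fin n, (i : ℕ) = n - 2 → v i = false)

instance : DecidablePred (Bad (n := n)) := fun _ => instDecidableAnd

/-- the key length computation at the step after an all-ones prefix -/
lemma len_after_ones (hn : 2 ≤ n) (v : Fin n → Bool) (m : ℕ) (hm : m < n)
    (hones : (lw v).take m = List.replicate m 1) :
    (dirWord ((lw v).take (m+1))).length = m + (cond (v ⟨m, hm⟩) 1 2) := by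
  rw [take_succ_lw v m hm,
    dirWord_snoc_eq _ _ (mem_take_lw v _) (mem_lw v _ (List.getElem_mem _)),
    hones, dirWord_replicate_one]
  simp only [List.length_append, List.length_replicate]
  rw [List.getD_eq_default _ _ (by simp), getElem_lw v m (by rw [length_lw]; omega)]

lemma bad_of_ones_prefix (hn : 2 ≤ n) (v : Fin n → Bool) (hK : K v < n)
    (hall : ∀ i : Fin n, (i : ℕ) < K v - 1 → v i = true) : Bad v := by
  have hKpos := K_pos v (by omega)
  have hones : (lw v).take (K v - 1) = List.replicate (K v - 1) 1 :=
    (take_lw_ones_iff v (K v - 1) (by omega)).2 hall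
  have hPK := Pv_K v
  unfold Pv at hPK
  have e : (lw v).take (K v - 1 + 1) = (lw v).take (K v) := by congr 1; omega
  rw [← e, len_after_ones hn v (K v - 1) (by omega) hones] at hPK
  have hKn : K v = n - 1 ∧ v ⟨K v - 1, by omega⟩ = false := by
    cases hvi : v ⟨K v - 1, by omega⟩
    · rw [hvi] at hPK; simp at hPK
      constructor
      · omega
      · rfl
    · rw [hvi] at hPK; simp at hPK
      omega
  constructor
  · intro i hi
    exact hall i (by omega)
  · intro i hi
    have : i = ⟨K v - 1, by omega⟩ := by
      apply Fin.ext
      simp only []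
      omega
    rw [this]
    exact hKn.2

lemma K_of_Bad (hn : 2 ≤ n) (v : Fin n → Bool) (hb : Bad v) : K v = n - 1 := by
  have hones : (lw v).take (n-2) = List.replicate (n-2) 1 :=
    (take_lw_ones_iff v (n-2) (by omega)).2 (fun i hi => hb.1 i hi)
  have hnp : ¬ Pv v (n-2) := by
    unfold Pv
    rw [hones, dirWord_replicate_one, List.length_replicate]
    omega
  have hP : Pv v (n-1) := by
    unfold Pv
    have e : (lw v).take (n - 2 + 1) = (lw v).take (n - 1) := by congr 1; omega
    rw [← e, len_after_ones hn v (n-2) (by omega) hones,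
      hb.2 ⟨n-2, by omega⟩ rfl]
    simp
    omega
  have h1 : K v ≤ n - 1 := Nat.find_le hP
  have h2 : ¬ (K v ≤ n - 2) := by
    intro hc
    exact hnp (Pv_mono v (K v) (n-2) hc (Pv_K v))
  omega

lemma idx_of_Bad (hn : 2 ≤ n) (v : Fin n → Bool) (hb : Bad v) : v (idx v hn) = false := by
  apply hb.2
  unfold idx
  simp only []
  rw [K_of_Bad hn v hb]
  omega

/-- flipping the coordinate at the block index does not change `K`, away from `Bad`. -/
lemma K_update (hn : 2 ≤ n) (v : Fin n → Bool) (b : Bool) (hnb : ¬ Bad v) :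
    K (Function.update v (idx v hn) b) = K v := by
  set u := Function.update v (idx v hn) b with hu
  have hKpos := K_pos v (by omega)
  have hKle := K_le v
  have htake : ∀ m, m ≤ K v - 1 → (lw u).take m = (lw v).take m := by
    intro m hm
    apply take_lw_eq
    intro i hi
    rw [hu, Function.update_of_ne]
    intro he
    rw [he] at hi
    unfold idx at hi
    simp only [] at hi
    omega
  have hnotP : ∀ m, m < K v → ¬ Pv u m := by
    intro m hm
    unfold Pv
    rw [htake m (by omega)]
    exact not_Pv_lt v m hm
  have hPK : Pv u (K v) := by
    rcases Nat.lt_or_ge (K v) n with hlt | hge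
    · have hnall : ¬ ∀ i : Fin n, (i : ℕ) < K v - 1 → v i = true := by
        intro hall
        exact hnb (bad_of_ones_prefix hn v hlt hall)
      have hnones : (lw v).take (K v - 1) ≠ List.replicate (K v - 1) 1 := by
        intro hc
        exact hnall ((take_lw_ones_iff v (K v - 1) (by omega)).1 hc)
      have hlenlt : (K v - 1) < (dirWord ((lw v).take (K v - 1))).length := by
        have := len_lt_of_not_ones _ (mem_take_lw v (K v - 1)) ?_
        · rwa [List.length_take, length_lw, min_eq_left (by omega)] at this
        · rwa [List.length_take, length_lw, min_eq_left (by omega)]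
      -- lengths after the block step agree for u and v
      have hlen_eq : ∀ w : Fin n → Bool, (lw w).take (K v - 1) = (lw v).take (K v - 1) →
          (dirWord ((lw w).take (K v - 1 + 1))).length
          = (dirWord ((lw v).take (K v - 1))).length
            + (dirWord ((lw v).take (K v - 1))).getD (K v - 1) 0 := by
        intro w hw
        rw [take_succ_lw w (K v - 1) (by omega),
          dirWord_snoc_eq _ _ (by rw [hw]; exact mem_take_lw v _) (mem_lw w _ (List.getElem_mem _)),
          hw]
        simp only [List.length_append, List.length_replicate]
        congr 1
        rw [List.length_take, length_lw, min_eq_left (by omega),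
          List.getD_eq_getElem _ _ hlenlt, List.getD_eq_getElem _ _ hlenlt]
      have hPv := Pv_K v
      unfold Pv at hPv ⊢
      have e : ∀ w : Fin n → Bool, (lw w).take (K v - 1 + 1) = (lw w).take (K v) := by
        intro w; congr 1; omega
      rw [← e u, hlen_eq u (htake (K v - 1) (le_refl _))]
      rw [← e v, hlen_eq v rfl] at hPv
      exact hPv
    · have hKn : K v = n := by omega
      rw [hKn]
      exact Pv_top u
  have h1 : K u ≤ K v := Nat.find_le hPK
  have h2 : ¬ (K u < K v) := fun hc => (hnotP (K u) hc) (Pv_K u)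
  omega

/-! ### summation machinery -/

def wt (p : ℝ) (v : Fin n → Bool) : ℝ := ∏ i, (cond (v i) p (1-p))

lemma card_filter_lt (m : ℕ) (h : m ≤ n) :
    (Finset.univ.filter (fun i : Fin n => (i:ℕ) < m)).card = m := by
  have e : Finset.univ.filter (fun i : Fin n => (i:ℕ) < m)
      = (Finset.range m).attachFin (fun x hx => lt_of_lt_of_le (Finset.mem_range.mp hx) h) := by
    ext i
    simp [Finset.mem_attachFin]
  rw [e, Finset.card_attachFin, Finset.card_range]

lemma sum_wt_cylinder (p : ℝ) (s : Finset (Fin n)) (b : Fin n → Bool) :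
    ∑ v ∈ Finset.univ.filter (fun v : Fin n → Bool => ∀ i ∈ s, v i = b i), wt p v
      = ∏ i ∈ s, (cond (b i) p (1-p)) := by
  classical
  set g : Fin n → Bool → ℝ := fun i x =>
    if i ∈ s then (if x = b i then cond (b i) p (1-p) else 0) else cond x p (1-p) with hg
  have key : ∏ i, (∑ x : Bool, g i x) = ∑ v : Fin n → Bool, ∏ i, g i (v i) :=
    Fintype.prod_sum g
  have lhs : ∑ v : Fin n → Bool, ∏ i, g i (v i)
      = ∑ v ∈ Finset.univ.filter (fun v : Fin n → Bool => ∀ i ∈ s, v i = b i), wt p v := by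
    rw [← Finset.sum_filter_add_sum_filter_not Finset.univ
      (fun v : Fin n → Bool => ∀ i ∈ s, v i = b i)]
    have h2 : ∑ v ∈ Finset.univ.filter
        (fun v : Fin n → Bool => ¬ ∀ i ∈ s, v i = b i), ∏ i, g i (v i) = 0 := by
      apply Finset.sum_eq_zero
      intro v hv
      simp only [Finset.mem_filter] at hv
      push_neg at hv
      obtain ⟨i, his, hne⟩ := hv.2
      apply Finset.prod_eq_zero (Finset.mem_univ i)
      rw [hg]
      simp only [his, if_true, if_neg hne]
    rw [h2, add_zero]
    apply Finset.sum_congr rfl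
    intro v hv
    simp only [Finset.mem_filter] at hv
    unfold wt
    apply Finset.prod_congr rfl
    intro i _
    rw [hg]
    by_cases his : i ∈ s
    · simp only [his, if_true, hv.2 i his, if_pos rfl]
    · simp [his]
  have rhs : ∏ i, (∑ x : Bool, g i x) = ∏ i ∈ s, (cond (b i) p (1-p)) := by
    have e1 : ∀ i, (∑ x : Bool, g i x) = if i ∈ s then cond (b i) p (1-p) else 1 := by
      intro i
      rw [Fintype.sum_bool, hg]
      by_cases his : i ∈ s
      · simp only [his, if_true]
        cases hbi : b i <;> simp
      · simp only [his, if_false, Bool.cond_true, Bool.cond_false]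
        ring
    rw [Finset.prod_congr rfl (fun i _ => e1 i), Finset.prod_ite_mem, Finset.univ_inter]
  rw [← lhs, ← key, rhs]

lemma sum_wt_univ (p : ℝ) : ∑ v : Fin n → Bool, wt p v = 1 := by
  have := sum_wt_cylinder (n := n) p ∅ (fun _ => true)
  simpa using this

lemma wt_update (p : ℝ) (v : Fin n → Bool) (i₀ : Fin n) (b : Bool) :
    wt p (Function.update v i₀ b) * cond (v i₀) p (1-p) = wt p v * cond b p (1-p) := by
  unfold wt
  have e1 : ∏ i, (cond ((Function.update v i₀ b) i) p (1-p))
      = cond b p (1-p) * ∏ i ∈ Finset.univ.erase i₀, (cond (v i) p (1-p)) := by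
    rw [← Finset.mul_prod_erase Finset.univ
      (fun i => cond ((Function.update v i₀ b) i) p (1-p)) (Finset.mem_univ i₀)]
    congr 1
    · rw [Function.update_self]
    · apply Finset.prod_congr rfl
      intro i hi
      rw [Function.update_of_ne (Finset.ne_of_mem_erase hi)]
  have e2 : ∏ i, (cond (v i) p (1-p))
      = cond (v i₀) p (1-p) * ∏ i ∈ Finset.univ.erase i₀, (cond (v i) p (1-p)) :=
    (Finset.mul_prod_erase Finset.univ (fun i => cond (v i) p (1-p)) (Finset.mem_univ i₀)).symm
  rw [e1, e2]
  ring

/-! ### the four masses -/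

lemma sum_wt_Kn (hn : 2 ≤ n) (p : ℝ) :
    ∑ v ∈ Finset.univ.filter (fun v : Fin n → Bool => K v = n), wt p v = p^(n-1) := by
  have e : Finset.univ.filter (fun v : Fin n → Bool => K v = n)
      = Finset.univ.filter (fun v : Fin n → Bool =>
          ∀ i ∈ Finset.univ.filter (fun i : Fin n => (i:ℕ) < n-1), v i = true) := by
    ext v
    simp only [Finset.mem_filter, Finset.mem_univ, true_and]
    rw [K_eq_n_iff hn v]
  rw [e, sum_wt_cylinder]
  simp only [Bool.cond_true]
  rw [Finset.prod_const, card_filter_lt (n-1) (by omega)]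

lemma sum_wt_Bad (hn : 2 ≤ n) (p : ℝ) :
    ∑ v ∈ Finset.univ.filter (fun v : Fin n → Bool => Bad v), wt p v = p^(n-2) * (1-p) := by
  classical
  have e : Finset.univ.filter (fun v : Fin n → Bool => Bad v)
      = Finset.univ.filter (fun v : Fin n → Bool =>
          ∀ i ∈ Finset.univ.filter (fun i : Fin n => (i:ℕ) < n-1), v i
            = decide ((i:ℕ) < n-2)) := by
    ext v
    simp only [Finset.mem_filter, Finset.mem_univ, true_and]
    constructor
    · intro hB i hi
      by_cases h2 : (i:ℕ) < n-2
      · simp [h2, hB.1 i h2]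
      · have h3 : (i:ℕ) = n-2 := by omega
        simp [h2, hB.2 i h3]
    · intro h
      constructor
      · intro i hi
        have h4 := h i (by omega)
        simpa [hi] using h4
      · intro i hi
        have h4 := h i (by omega)
        rw [h4]
        simp [hi]
  rw [e, sum_wt_cylinder]
  rw [← Finset.prod_filter_mul_prod_filter_not
    (Finset.univ.filter (fun i : Fin n => (i:ℕ) < n-1))
    (fun i : Fin n => (i:ℕ) < n-2) (fun i => cond (decide ((i:ℕ) < n-2)) p (1-p))]
  have e1 : (Finset.univ.filter (fun i : Fin n => (i:ℕ) < n-1)).filter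
        (fun i : Fin n => (i:ℕ) < n-2)
      = Finset.univ.filter (fun i : Fin n => (i:ℕ) < n-2) := by
    ext i
    simp only [Finset.mem_filter, Finset.mem_univ, true_and]
    omega
  have e2 : (Finset.univ.filter (fun i : Fin n => (i:ℕ) < n-1)).filter
        (fun i : Fin n => ¬ (i:ℕ) < n-2) = {(⟨n-2, by omega⟩ : Fin n)} := by
    ext i
    simp only [Finset.mem_filter, Finset.mem_univ, true_and, Finset.mem_singleton,
      Fin.ext_iff]
    omega
  rw [e1, e2]
  have e3 : ∀ i ∈ Finset.univ.filter (fun i : Fin n => (i:ℕ) < n-2),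
      cond (decide ((i:ℕ) < n-2)) p (1-p) = p := by
    intro i hi
    simp only [Finset.mem_filter] at hi
    simp [hi.2]
  rw [Finset.prod_congr rfl e3, Finset.prod_const, card_filter_lt (n-2) (by omega),
    Finset.prod_singleton]
  norm_num

lemma sum_wt_allTrue (p : ℝ) : wt p (fun _ : Fin n => true) = p^n := by
  unfold wt
  simp [Finset.prod_const]

/-! ### the flip bijection -/

lemma not_Bad_of_idx_true (hn : 2 ≤ n) (v : Fin n → Bool) (h : v (idx v hn) = true) :
    ¬ Bad v :=
  fun hb => by rw [idx_of_Bad hn v hb] at h; exact Bool.false_ne_true h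

lemma idx_update (hn : 2 ≤ n) (v : Fin n → Bool) (b : Bool) (hnb : ¬ Bad v) :
    idx (Function.update v (idx v hn) b) hn = idx v hn := by
  apply Fin.ext
  show K (Function.update v (idx v hn) b) - 1 = K v - 1
  rw [K_update hn v b hnb]

lemma flip_S_mem (hn : 2 ≤ n) (v : Fin n → Bool) (hK : K v < n)
    (ht : v (idx v hn) = true) :
    K (Function.update v (idx v hn) false) < n ∧
    (Function.update v (idx v hn) false) (idx (Function.update v (idx v hn) false) hn) = false ∧
    ¬ Bad (Function.update v (idx v hn) false) := by
  have hnb := not_Bad_of_idx_true hn v ht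
  set u := Function.update v (idx v hn) false with hu
  have hKu : K u = K v := K_update hn v false hnb
  have hidxu : idx u hn = idx v hn := idx_update hn v false hnb
  refine ⟨by omega, ?_, ?_⟩
  · rw [hidxu, hu, Function.update_self]
  · intro hb
    have hKn1 : K u = n - 1 := K_of_Bad hn u hb
    have hKv : K v = n - 1 := by omega
    have hiv : ((idx v hn : Fin n) : ℕ) = n - 2 := by
      unfold idx
      simp only []
      omega
    have hall : ∀ i : Fin n, (i : ℕ) < K v - 1 → v i = true := by
      intro i hi
      have hne : i ≠ idx v hn := by
        intro he
        rw [he, hiv] at hi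
        omega
      have : v i = u i := by rw [hu, Function.update_of_ne hne]
      rw [this]
      exact hb.1 i (by omega)
    exact hnb (bad_of_ones_prefix hn v hK hall)

lemma flip_S'_mem (hn : 2 ≤ n) (v : Fin n → Bool) (hK : K v < n)
    (hf : v (idx v hn) = false) (hnb : ¬ Bad v) :
    K (Function.update v (idx v hn) true) < n ∧
    (Function.update v (idx v hn) true) (idx (Function.update v (idx v hn) true) hn) = true := by
  have hKu : K (Function.update v (idx v hn) true) = K v := K_update hn v true hnb
  have hidxu := idx_update hn v true hnb
  exact ⟨by omega, by rw [hidxu, Function.update_self]⟩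

lemma flip_flip (hn : 2 ≤ n) (v : Fin n → Bool) (b : Bool) (hnb : ¬ Bad v)
    (hv : v (idx v hn) = !b) :
    Function.update (Function.update v (idx v hn) b)
      (idx (Function.update v (idx v hn) b) hn) (!b) = v := by
  rw [idx_update hn v b hnb, Function.update_idem, ← hv, Function.update_eq_self]

/-- the key cancellation identity -/
lemma sum_S_S' (hn : 2 ≤ n) (p : ℝ) :
    (1-p) * ∑ v ∈ Finset.univ.filter
        (fun v : Fin n → Bool => K v < n ∧ v (idx v hn) = true), wt p v
      = p * ∑ v ∈ Finset.univ.filter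
        (fun v : Fin n → Bool => K v < n ∧ v (idx v hn) = false ∧ ¬ Bad v), wt p v := by
  rw [Finset.mul_sum, Finset.mul_sum]
  apply Finset.sum_nbij' (i := fun v => Function.update v (idx v hn) false)
    (j := fun v => Function.update v (idx v hn) true)
  · intro v hv
    simp only [Finset.mem_filter, Finset.mem_univ, true_and] at hv ⊢
    exact flip_S_mem hn v hv.1 hv.2
  · intro v hv
    simp only [Finset.mem_filter, Finset.mem_univ, true_and] at hv ⊢
    exact flip_S'_mem hn v hv.1 hv.2.1 hv.2.2
  · intro v hv
    simp only [Finset.mem_filter, Finset.mem_univ, true_and] at hv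
    exact flip_flip hn v false (not_Bad_of_idx_true hn v hv.2) (by simp [hv.2])
  · intro v hv
    simp only [Finset.mem_filter, Finset.mem_univ, true_and] at hv
    exact flip_flip hn v true hv.2.2 (by simp [hv.2.1])
  · intro v hv
    simp only [Finset.mem_filter, Finset.mem_univ, true_and] at hv
    have hw := wt_update p v (idx v hn) false
    rw [hv.2] at hw
    simp only [Bool.cond_true, Bool.cond_false] at hw
    linarith

/-- the partition of the cube -/
lemma sum_partition (hn : 2 ≤ n) (p : ℝ) :
    (1 : ℝ) = p^(n-1) + p^(n-2) * (1-p)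
      + (∑ v ∈ Finset.univ.filter
          (fun v : Fin n → Bool => K v < n ∧ v (idx v hn) = true), wt p v)
      + (∑ v ∈ Finset.univ.filter
          (fun v : Fin n → Bool => K v < n ∧ v (idx v hn) = false ∧ ¬ Bad v), wt p v) := by
  classical
  have h1 := Finset.sum_filter_add_sum_filter_not Finset.univ
    (fun v : Fin n → Bool => K v = n) (wt p)
  have h2 := Finset.sum_filter_add_sum_filter_not
    (Finset.univ.filter (fun v : Fin n → Bool => ¬ K v = n))
    (fun v : Fin n → Bool => Bad v) (wt p)
  have h3 := Finset.sum_filter_add_sum_filter_not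
    ((Finset.univ.filter (fun v : Fin n → Bool => ¬ K v = n)).filter
      (fun v : Fin n → Bool => ¬ Bad v))
    (fun v : Fin n → Bool => v (idx v hn) = true) (wt p)
  have e1 : (Finset.univ.filter (fun v : Fin n → Bool => ¬ K v = n)).filter
      (fun v : Fin n → Bool => Bad v)
      = Finset.univ.filter (fun v : Fin n → Bool => Bad v) := by
    ext v
    simp only [Finset.mem_filter, Finset.mem_univ, true_and]
    constructor
    · exact fun h => h.2
    · intro h
      refine ⟨?_, h⟩
      have := K_of_Bad hn v h
      omega
  have e2 : ((Finset.univ.filter (fun v : Fin n → Bool => ¬ K v = n)).filter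
      (fun v : Fin n → Bool => ¬ Bad v)).filter
        (fun v : Fin n → Bool => v (idx v hn) = true)
      = Finset.univ.filter
          (fun v : Fin n → Bool => K v < n ∧ v (idx v hn) = true) := by
    ext v
    simp only [Finset.mem_filter, Finset.mem_univ, true_and]
    have := K_le v
    constructor
    · rintro ⟨⟨h1', _⟩, h3'⟩
      exact ⟨by omega, h3'⟩
    · rintro ⟨h1', h2'⟩
      exact ⟨⟨by omega, not_Bad_of_idx_true hn v h2'⟩, h2'⟩
  have e3 : ((Finset.univ.filter (fun v : Fin n → Bool => ¬ K v = n)).filter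
      (fun v : Fin n → Bool => ¬ Bad v)).filter
        (fun v : Fin n → Bool => ¬ v (idx v hn) = true)
      = Finset.univ.filter
          (fun v : Fin n → Bool => K v < n ∧ v (idx v hn) = false ∧ ¬ Bad v) := by
    ext v
    simp only [Finset.mem_filter, Finset.mem_univ, true_and, Bool.not_eq_true]
    have := K_le v
    constructor
    · rintro ⟨⟨h1', h2'⟩, h3'⟩
      exact ⟨by omega, h3', h2'⟩
    · rintro ⟨h1', h2', h3'⟩
      exact ⟨⟨by omega, h3'⟩, h2'⟩
  rw [e1] at h2
  rw [e2, e3] at h3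
  rw [sum_wt_univ p] at h1
  rw [sum_wt_Kn hn p] at h1
  rw [sum_wt_Bad hn p] at h2
  linarith

theorem sum_acc (hn : 2 ≤ n) (p : ℝ) :
    ∑ v ∈ Finset.univ.filter (fun v : Fin n → Bool => acc v), wt p v
      = p * (1 - p^(n-1) - p^(n-2)*(1-p)) + p^n := by
  classical
  have hsplit := Finset.sum_filter_add_sum_filter_not
    (Finset.univ.filter (fun v : Fin n → Bool => acc v))
    (fun v : Fin n → Bool => K v = n) (wt p)
  have e1 : (Finset.univ.filter (fun v : Fin n → Bool => acc v)).filter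
      (fun v : Fin n → Bool => K v = n) = {fun _ : Fin n => true} := by
    ext v
    simp only [Finset.mem_filter, Finset.mem_univ, true_and, Finset.mem_singleton]
    constructor
    · rintro ⟨hacc, hKn⟩
      funext i
      rcases Nat.lt_or_ge (i : ℕ) (n-1) with hi | hi
      · exact (K_eq_n_iff hn v).1 hKn i hi
      · have : i = idx v hn := by
          apply Fin.ext
          unfold idx
          simp only []
          have := i.isLt
          omega
        rw [this]
        exact (acc_iff hn v).1 hacc
    · rintro rfl
      have hKn : K (fun _ : Fin n => true) = n := (K_eq_n_iff hn _).2 (fun _ _ => rfl)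
      exact ⟨(acc_iff hn _).2 rfl, hKn⟩
  have e2 : (Finset.univ.filter (fun v : Fin n → Bool => acc v)).filter
      (fun v : Fin n → Bool => ¬ K v = n)
      = Finset.univ.filter
          (fun v : Fin n → Bool => K v < n ∧ v (idx v hn) = true) := by
    ext v
    simp only [Finset.mem_filter, Finset.mem_univ, true_and]
    have := K_le v
    constructor
    · rintro ⟨hacc, hK⟩
      exact ⟨by omega, (acc_iff hn v).1 hacc⟩
    · rintro ⟨hK, ht⟩
      exact ⟨(acc_iff hn v).2 ht, by omega⟩
  rw [e1, e2] at hsplit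
  rw [Finset.sum_singleton, sum_wt_allTrue] at hsplit
  have hSS' := sum_S_S' hn p
  have hpart := sum_partition hn p
  set a := ∑ v ∈ Finset.univ.filter
      (fun v : Fin n → Bool => K v < n ∧ v (idx v hn) = true), wt p v with ha
  set b := ∑ v ∈ Finset.univ.filter
      (fun v : Fin n → Bool => K v < n ∧ v (idx v hn) = false ∧ ¬ Bad v), wt p v with hb
  have hval : a = p * (1 - p^(n-1) - p^(n-2)*(1-p)) := by
    have hab : a + b = 1 - p^(n-1) - p^(n-2)*(1-p) := by linarith
    linear_combination hSS' + p * hab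
  rw [← hsplit, hval]
  ring

theorem sum_acc_closed (hn : 2 ≤ n) (p : ℝ) :
    ∑ v ∈ Finset.univ.filter (fun v : Fin n → Bool => acc v), wt p v
      = p * (1 - p^(n-2) + p^(n-1)) := by
  rw [sum_acc hn p]
  obtain ⟨m, rfl⟩ : ∃ m, n = m + 2 := ⟨n - 2, by omega⟩
  have e1 : m + 2 - 1 = m + 1 := rfl
  have e2 : m + 2 - 2 = m := rfl
  rw [e1, e2]
  ring

end Stmt8

end Aux

open MeasureTheory ProbabilityTheory Filter

/-- for an i.i.d. directing sequence over {1,2} with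
P(T_n = 1) = p ∈ (0,1), the directed sequence X = O_T satisfies, for n ≥ 2,
P(X_n = 1) = p(1 - p^{n-2} + p^{n-1}). -/
theorem stmt8 {Ω : Type*} [MeasurableSpace Ω] (μ : Measure Ω)
    [IsProbabilityMeasure μ] (p : ℝ) (hp : p ∈ Set.Ioo (0 : ℝ) 1)
    (T : ℕ → Ω → ℕ) (hmeas : ∀ n, Measurable (T n))
    (hindep : iIndepFun T μ)
    (h1 : ∀ n, 1 ≤ n → μ {ω | T n ω = 1} = ENNReal.ofReal p)
    (h2 : ∀ n, 1 ≤ n → μ {ω | T n ω = 2} = ENNReal.ofReal (1 - p)) :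
    ∀ n, 2 ≤ n →
      μ {ω | dirSeq (fun k => T k ω) n = 1}
        = ENNReal.ofReal (p * (1 - p ^ (n - 2) + p ^ (n - 1))) := by
  intro n hn
  classical
  obtain ⟨hp0, hp1⟩ := hp
  -- the good set
  set G : Set Ω := ⋂ i : Fin n, {ω | T (i+1) ω = 1 ∨ T (i+1) ω = 2} with hG
  have hGmeas : MeasurableSet G := by
    apply MeasurableSet.iInter
    intro i
    exact ((hmeas _ (measurableSet_singleton 1)).union
      (hmeas _ (measurableSet_singleton 2)))
  have hGc : μ Gᶜ = 0 := by
    rw [hG, Set.compl_iInter]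
    apply measure_iUnion_null
    intro i
    have hone : μ {ω | T (i+1) ω = 1 ∨ T (i+1) ω = 2} = 1 := by
      have hd : Disjoint {ω | T (i+1) ω = 1} {ω | T (i+1) ω = 2} := by
        rw [Set.disjoint_iff]
        rintro ω ⟨ha, hb⟩
        simp only [Set.mem_setOf_eq] at ha hb
        omega
      have he : {ω | T (i+1) ω = 1 ∨ T (i+1) ω = 2}
          = {ω | T (i+1) ω = 1} ∪ {ω | T (i+1) ω = 2} := rfl
      rw [he, measure_union hd (hmeas _ (measurableSet_singleton 2)),
        h1 (i+1) (by omega), h2 (i+1) (by omega),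
        ← ENNReal.ofReal_add (by linarith) (by linarith)]
      norm_num
    have hm : MeasurableSet {ω | T (i+1) ω = 1 ∨ T (i+1) ω = 2} :=
      ((hmeas _ (measurableSet_singleton 1)).union (hmeas _ (measurableSet_singleton 2)))
    rw [measure_compl hm (measure_ne_top μ _), hone, measure_univ, tsub_self]
  set E : Set Ω := {ω | dirSeq (fun k => T k ω) n = 1} with hE
  -- cylinders
  set C : (Fin n → Bool) → Set Ω :=
    fun v => ⋂ i : Fin n, {ω | T (i+1) ω = cond (v i) 1 2} with hC
  set V : Finset (Fin n → Bool) := Finset.univ.filter (fun v => Stmt8.acc (n := n) v) with hV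
  have hsplitEG : E ∩ G = ⋃ v ∈ V, C v := by
    ext ω
    constructor
    · rintro ⟨hEω, hGω⟩
      simp only [hG, Set.mem_iInter, Set.mem_setOf_eq] at hGω
      set v : Fin n → Bool := fun i => decide (T (i+1) ω = 1) with hv
      have hlw : Stmt8.lw v = List.ofFn (fun i : Fin n => T (i+1) ω) := by
        unfold Stmt8.lw
        congr 1
        funext i
        rcases hGω i with h | h
        · simp [hv, h]
        · rw [h]
          have : ¬ ((2:ℕ) = 1) := by omega
          simp [hv, h, this]
      have hacc : Stmt8.acc v := by
        unfold Stmt8.acc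
        rw [hlw]
        exact hEω
      have hvV : v ∈ V := by
        rw [hV]
        simp only [Finset.mem_filter, Finset.mem_univ, true_and]
        exact hacc
      refine Set.mem_biUnion hvV ?_
      simp only [hC, Set.mem_iInter, Set.mem_setOf_eq]
      intro i
      rcases hGω i with h | h
      · simp [hv, h]
      · have h2' : ¬ ((2:ℕ) = 1) := by omega
        simp [hv, h, h2']
    · intro hω
      simp only [Set.mem_iUnion] at hω
      obtain ⟨v, hvV, hωC⟩ := hω
      simp only [hC, Set.mem_iInter, Set.mem_setOf_eq] at hωC
      have hvacc : Stmt8.acc v := by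
        simp only [hV, Finset.mem_filter] at hvV
        exact hvV.2
      have hlw : Stmt8.lw v = List.ofFn (fun i : Fin n => T (i+1) ω) := by
        unfold Stmt8.lw
        congr 1
        funext i
        rw [hωC i]
      constructor
      · show dirSeq (fun k => T k ω) n = 1
        unfold dirSeq
        unfold Stmt8.acc at hvacc
        rw [hlw] at hvacc
        exact hvacc
      · simp only [hG, Set.mem_iInter, Set.mem_setOf_eq]
        intro i
        rw [hωC i]
        cases v i <;> simp
  -- μ E = μ (E ∩ G)
  have hEEG : μ E = μ (E ∩ G) := by
    apply le_antisymm
    · calc μ E ≤ μ ((E ∩ G) ∪ (E ∩ Gᶜ)) := by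
            apply measure_mono
            rw [← Set.inter_union_distrib_left, Set.union_compl_self, Set.inter_univ]
        _ ≤ μ (E ∩ G) + μ (E ∩ Gᶜ) := measure_union_le _ _
        _ ≤ μ (E ∩ G) + μ Gᶜ := by
            gcongr
            exact Set.inter_subset_right
        _ = μ (E ∩ G) := by rw [hGc, add_zero]
    · exact measure_mono Set.inter_subset_left
  -- each cylinder's measure
  have hCyl : ∀ v : Fin n → Bool,
      μ (C v) = ∏ i : Fin n, (cond (v i) (ENNReal.ofReal p) (ENNReal.ofReal (1-p))) := by
    intro v
    set vv : ℕ → Bool := fun j => if h : j - 1 < n then v ⟨j-1, h⟩ else true with hvv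
    set S : Finset ℕ := (Finset.range n).map ⟨fun i => i + 1, add_left_injective 1⟩
      with hS
    have hCeq : C v = ⋂ j ∈ S, T j ⁻¹' {cond (vv j) 1 2} := by
      ext ω
      simp only [hC, Set.mem_iInter, Set.mem_setOf_eq, hS, Finset.mem_map,
        Finset.mem_range, Function.Embedding.coeFn_mk, Set.mem_preimage,
        Set.mem_singleton_iff]
      constructor
      · rintro h j ⟨i, hi, rfl⟩
        have : vv (i+1) = v ⟨i, hi⟩ := by
          simp only [hvv, Nat.add_sub_cancel, dif_pos hi]
        rw [this]
        exact h ⟨i, hi⟩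
      · intro h i
        have h2' := h (i+1) ⟨i, i.isLt, rfl⟩
        have : vv ((i:ℕ)+1) = v i := by
          simp only [hvv, Nat.add_sub_cancel, dif_pos i.isLt, Fin.eta]
        rwa [this] at h2'
    rw [hCeq, hindep.meas_biInter (fun j _ => ⟨{cond (vv j) 1 2},
      measurableSet_singleton _, rfl⟩)]
    rw [hS, Finset.prod_map]
    simp only [Function.Embedding.coeFn_mk]
    rw [← Fin.prod_univ_eq_prod_range
      (fun i => μ (T (i+1) ⁻¹' {cond (vv (i+1)) 1 2})) n]
    apply Finset.prod_congr rfl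
    intro i _
    have hvvi : vv ((i:ℕ)+1) = v i := by
      simp only [hvv, Nat.add_sub_cancel, dif_pos i.isLt, Fin.eta]
    rw [hvvi]
    have hpre : ∀ c : ℕ, T ((i:ℕ)+1) ⁻¹' {c} = {ω | T ((i:ℕ)+1) ω = c} := fun c => rfl
    cases hvi : v i
    · simp only [Bool.cond_false]
      rw [hpre, h2 ((i:ℕ)+1) (by omega)]
    · simp only [Bool.cond_true]
      rw [hpre, h1 ((i:ℕ)+1) (by omega)]
  -- disjointness and measurability
  have hCmeas : ∀ v, MeasurableSet (C v) := by
    intro v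
    apply MeasurableSet.iInter
    intro i
    exact hmeas _ (measurableSet_singleton _)
  have hdisj : Set.PairwiseDisjoint (↑V) C := by
    intro v hv u hu hne
    rw [Function.onFun, Set.disjoint_iff]
    rintro ω ⟨hω1, hω2⟩
    simp only [hC, Set.mem_iInter, Set.mem_setOf_eq] at hω1 hω2
    apply hne
    funext i
    have := (hω1 i).symm.trans (hω2 i)
    cases hvi : v i <;> cases hui : u i <;> rw [hvi, hui] at this <;> simp at this <;> rfl
  -- assemble
  rw [hEEG, hsplitEG, measure_biUnion_finset hdisj (fun v _ => hCmeas v)]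
  have hfact : ∀ v : Fin n → Bool,
      ∏ i : Fin n, (cond (v i) (ENNReal.ofReal p) (ENNReal.ofReal (1-p)))
        = ENNReal.ofReal (Stmt8.wt p v) := by
    intro v
    unfold Stmt8.wt
    rw [ENNReal.ofReal_prod_of_nonneg]
    · apply Finset.prod_congr rfl
      intro i _
      cases hvi : v i <;> simp
    · intro i _
      cases hvi : v i <;> simp <;> linarith
  calc ∑ v ∈ V, μ (C v) = ∑ v ∈ V, ENNReal.ofReal (Stmt8.wt p v) := by
        apply Finset.sum_congr rfl
        intro v _
        rw [hCyl v, hfact v]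
    _ = ENNReal.ofReal (∑ v ∈ V, Stmt8.wt p v) := by
        rw [ENNReal.ofReal_sum_of_nonneg]
        intro v _
        unfold Stmt8.wt
        apply Finset.prod_nonneg
        intro i _
        cases hvi : v i <;> simp <;> linarith
    _ = ENNReal.ofReal (p * (1 - p ^ (n - 2) + p ^ (n - 1))) := by
        rw [hV, Stmt8.sum_acc_closed hn p]
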